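/- Let R = K[x_1,...,x_n] with char(K) = 0 and let I ⊆ R be a monomial ideal such that A = R/I is Artinian and level of socle degree t. Write I = Ann(m_1) ∩ ... ∩ Ann(m_s) for the monomials m_1,...,m_s of degree t not in I (under the contraction/inverse system action). Then for ℓ = x_1 + ... + x_n and any k < t/2, the map ×ℓ^{t−2k} : A_k → A_{t−k} is injective. -/

import Mathlib

open MvPolynomial


section Sl2

variable {K : Type*} [Field K] [CharZero K] {M : Type*} [AddCommGroup M] [Module K M]

lemma sl2_pow_HE (E H : Module.End K M) (hHE : H * E = E * H + (2:K) • E) :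
    ∀ p : ℕ, H * E ^ p = E ^ p * H + ((2 * p : ℕ) : K) • E ^ p := by
  intro p
  induction p with
  | zero => simp
  | succ p ih =>
    have h1 : H * E ^ (p+1) = (H * E ^ p) * E := by rw [pow_succ, mul_assoc]
    rw [h1, ih, add_mul, smul_mul_assoc, mul_assoc, hHE, mul_add, ← mul_assoc, ← pow_succ,
      mul_smul_comm, ← pow_succ, add_assoc, ← add_smul]
    congr 1
    push_cast; ring

lemma sl2_pow_EF (E F H : Module.End K M) (hEF : E * F - F * E = H)
    (hHE : H * E = E * H + (2:K) • E) :
    ∀ p : ℕ, E ^ (p+1) * F = F * E ^ (p+1) + ((p+1 : ℕ) : K) • (E ^ p * H)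
      + ((p * (p+1) : ℕ) : K) • E ^ p := by
  intro p
  induction p with
  | zero => simp [← hEF]
  | succ p ih =>
    have h1 : E ^ (p+2) * F = E * (E ^ (p+1) * F) := by rw [← mul_assoc, ← pow_succ']
    have h3 : E * F = F * E + H := by rw [← hEF]; abel
    have h4 : H * E ^ (p+1) = E ^ (p+1) * H + ((2 * (p+1) : ℕ) : K) • E ^ (p+1) :=
      sl2_pow_HE E H hHE (p+1)
    rw [h1, ih, mul_add, mul_add, ← mul_assoc, h3, add_mul, mul_assoc, ← pow_succ', h4,
      mul_smul_comm, ← mul_assoc, ← pow_succ', mul_smul_comm, ← pow_succ']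
    push_cast
    module

lemma sl2_lowest (E F H : Module.End K M) (hEF : E * F - F * E = H)
    (hHE : H * E = E * H + (2:K) • E) (m : ℕ) (v : M)
    (hHv : H v = -(m:K) • v) (hFv : F v = 0) :
    ∀ p : ℕ, p ≤ m → (E ^ p) v = 0 → v = 0 := by
  intro p
  induction p with
  | zero => intro _ h; simpa using h
  | succ p ih =>
    intro hpm hEv
    refine ih (le_of_lt (Nat.lt_of_succ_le hpm)) ?_
    have h0 : (E ^ (p+1) * F) v = 0 := by
      rw [Module.End.mul_apply, hFv, map_zero]
    rw [sl2_pow_EF E F H hEF hHE p] at h0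
    simp only [LinearMap.add_apply, LinearMap.smul_apply, Module.End.mul_apply] at h0
    rw [hEv, map_zero, hHv, map_smul, zero_add, smul_smul, ← add_smul] at h0
    have h2 : (((p+1:ℕ):K) * (-(m:K)) + ((p*(p+1):ℕ):K)) ≠ 0 := by
      have hne : ((p:K)) ≠ (m:K) := by
        exact_mod_cast Nat.ne_of_lt (Nat.lt_of_succ_le hpm)
      have h3 : (((p+1:ℕ):K) * (-(m:K)) + ((p*(p+1):ℕ):K))
          = ((p+1:ℕ):K) * ((p:K) - (m:K)) := by push_cast; ring
      rw [h3]
      exact mul_ne_zero (Nat.cast_ne_zero.mpr (Nat.succ_ne_zero p)) (sub_ne_zero.mpr hne)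
    exact (smul_eq_zero.mp h0).resolve_left h2

lemma sl2_vanish (E F H : Module.End K M) (hEF : E * F - F * E = H)
    (hHE : H * E = E * H + (2:K) • E) (hHF : H * F = F * H - (2:K) • F) :
    ∀ (r m : ℕ) (v : M), H v = -(m:K) • v → (F ^ r) v = 0 → (E ^ m) v = 0 → v = 0 := by
  intro r
  induction r with
  | zero => intro m v _ h _; simpa using h
  | succ r ih =>
    intro m v hHv hFv hEv
    have hw : F v = 0 := by
      refine ih (m + 2) (F v) ?_ ?_ ?_
      · have h5 : (H * F) v = (F * H - (2:K) • F) v := by rw [hHF]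
        simp only [Module.End.mul_apply, LinearMap.sub_apply, LinearMap.smul_apply] at h5
        rw [hHv, map_smul] at h5
        rw [h5]
        push_cast
        module
      · have : (F ^ (r+1)) v = (F ^ r) (F v) := by
          rw [pow_succ, Module.End.mul_apply]
        rw [← this, hFv]
      · have hv1 : (E ^ (m+1)) v = 0 := by
          rw [pow_succ', Module.End.mul_apply, hEv, map_zero]
        have hv2 : (E ^ (m+1+1)) v = 0 := by
          rw [pow_succ', Module.End.mul_apply, hv1, map_zero]
        have h0 : (E ^ (m+1+1) * F) v = 0 := by
          rw [sl2_pow_EF E F H hEF hHE (m+1)]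
          simp only [LinearMap.add_apply, LinearMap.smul_apply, Module.End.mul_apply]
          simp [hv1, hv2, hHv]
        rw [Module.End.mul_apply] at h0
        exact h0
    exact sl2_lowest E F H hEF hHE m v hHv hw m le_rfl hEv

end Sl2
section Ops

variable {n : ℕ} {K : Type*} [Field K] [CharZero K]

local notation "R'" => MvPolynomial (Fin n) K

/-- Multiplication by `X j` as an endomorphism. -/
noncomputable def Mop (j : Fin n) : Module.End K R' := LinearMap.mulLeft K (X j)

/-- Partial derivative as an endomorphism. -/
noncomputable def Dop (j : Fin n) : Module.End K R' := (pderiv j).toLinearMap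

lemma Mop_apply (j : Fin n) (f : R') : Mop j f = X j * f := rfl

lemma Dop_apply (j : Fin n) (f : R') : Dop j f = pderiv j f := rfl

lemma DM_rel (i j : Fin n) :
    Dop (K := K) i * Mop j = Mop j * Dop i + (if i = j then 1 else 0) := by
  apply LinearMap.ext
  intro f
  simp only [Module.End.mul_apply, LinearMap.add_apply, Mop_apply, Dop_apply]
  rw [pderiv_mul]
  rcases eq_or_ne i j with h | h
  · subst h; simp [add_comm]
  · simp [h, Ne.symm h]

lemma MM_rel (i j : Fin n) : Mop (K := K) i * Mop j = Mop j * Mop i := by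
  apply LinearMap.ext; intro f
  simp only [Module.End.mul_apply, Mop_apply]
  ring

lemma DD_rel (i j : Fin n) : Dop (K := K) i * Dop j = Dop j * Dop i := by
  apply LinearMap.ext; intro f
  simp only [Module.End.mul_apply, Dop_apply]
  induction f using MvPolynomial.induction_on' with
  | monomial u c =>
    simp only [pderiv_monomial]
    rcases eq_or_ne i j with h | h
    · subst h; rfl
    · have e1 : ((u - Finsupp.single j 1 : Fin n →₀ ℕ)) i = u i := by
        rw [Finsupp.tsub_apply, Finsupp.single_eq_of_ne' (Ne.symm h), tsub_zero]
      have e2 : ((u - Finsupp.single i 1 : Fin n →₀ ℕ)) j = u j := by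
        rw [Finsupp.tsub_apply, Finsupp.single_eq_of_ne' h, tsub_zero]
      rw [e1, e2, tsub_tsub, tsub_tsub, add_comm (Finsupp.single j 1)]
      congr 1
      ring
  | add p q hp hq => simp [hp, hq]

variable (a : Fin n →₀ ℕ)

/-- The raising operator. -/
noncomputable def Eop : Module.End K R' :=
  ∑ j, ((a j : K) • Mop j - Mop j * Mop j * Dop j)

/-- The lowering operator. -/
noncomputable def Fop : Module.End K R' := ∑ j, Dop j

/-- The grading operator. -/
noncomputable def Hop : Module.End K R' :=
  ∑ j, ((2:K) • (Mop j * Dop j) - (a j : K) • 1)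

/-- Euler-type operator `G = ∑ X i ∂ i`. -/
noncomputable def Gop : Module.End K R' := ∑ i, Mop i * Dop i

lemma comm_MM (i j : Fin n) : Commute (Mop (K := K) i) (Mop j) := MM_rel i j

lemma comm_DD (i j : Fin n) : Commute (Dop (K := K) i) (Dop j) := DD_rel i j

lemma comm_DM {i j : Fin n} (h : i ≠ j) : Commute (Dop (K := K) i) (Mop j) := by
  have h2 := DM_rel (K := K) i j
  rw [if_neg h, add_zero] at h2
  exact h2

lemma weyl (j : Fin n) : Dop (K := K) j * Mop j = Mop j * Dop j + 1 := by
  simpa using DM_rel (K := K) j j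

lemma FM_rel (j : Fin n) : Fop (n := n) (K := K) * Mop j = Mop j * Fop + 1 := by
  rw [Fop, Finset.sum_mul, Finset.mul_sum]
  have h : ∀ i ∈ Finset.univ, Dop (K := K) i * Mop j
      = Mop j * Dop i + (if i = j then 1 else 0) := fun i _ => DM_rel i j
  rw [Finset.sum_congr rfl h, Finset.sum_add_distrib, Finset.sum_ite_eq' Finset.univ j
    (fun _ => (1 : Module.End K R'))]
  simp

lemma DM2_rel (i j : Fin n) : Dop (K := K) i * (Mop j * Mop j)
    = Mop j * Mop j * Dop i + (if i = j then (2:K) • Mop j else 0) := by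
  rw [← mul_assoc, DM_rel, add_mul, mul_assoc, DM_rel, mul_add, ← mul_assoc]
  split_ifs with h
  · rw [mul_one, one_mul, two_smul]
    abel
  · rw [mul_zero, zero_mul, add_zero, add_zero]

lemma FM2_rel (j : Fin n) : Fop (n := n) (K := K) * (Mop j * Mop j)
    = Mop j * Mop j * Fop + (2:K) • Mop j := by
  rw [Fop, Finset.sum_mul, Finset.mul_sum]
  have h : ∀ i ∈ Finset.univ, Dop (K := K) i * (Mop j * Mop j)
      = Mop j * Mop j * Dop i + (if i = j then (2:K) • Mop j else 0) := fun i _ => DM2_rel i j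
  rw [Finset.sum_congr rfl h, Finset.sum_add_distrib, Finset.sum_ite_eq' Finset.univ j
    (fun _ => ((2:K) • Mop j : Module.End K R'))]
  simp

lemma DF_rel (j : Fin n) : Dop (K := K) j * Fop (n := n) = Fop * Dop j := by
  rw [Fop, Finset.sum_mul, Finset.mul_sum]
  exact Finset.sum_congr rfl fun i _ => DD_rel j i

lemma hEF_rel : Eop (K := K) a * Fop - Fop * Eop a = Hop a := by
  rw [Eop, Hop, Finset.sum_mul, Finset.mul_sum, ← Finset.sum_sub_distrib]
  refine Finset.sum_congr rfl fun j _ => ?_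
  rw [sub_mul, mul_sub, smul_mul_assoc, mul_smul_comm]
  have h1 : Mop (K := K) j * Mop j * Dop j * Fop = Mop j * Mop j * Fop * Dop j := by
    rw [mul_assoc, DF_rel, ← mul_assoc]
  have h2 : Fop (n := n) (K := K) * (Mop j * Mop j * Dop j)
      = Mop j * Mop j * Fop * Dop j + (2:K) • (Mop j * Dop j) := by
    rw [← mul_assoc, FM2_rel, add_mul, smul_mul_assoc, mul_assoc]
  rw [h1, h2, FM_rel, smul_add]
  abel

lemma MDM_rel (i j : Fin n) : (Mop (K := K) i * Dop i) * Mop j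
    = Mop j * (Mop i * Dop i) + (if i = j then Mop i else 0) := by
  rw [mul_assoc, DM_rel, mul_add, ← mul_assoc, MM_rel, mul_assoc]
  split_ifs with h
  · rw [mul_one]
  · rw [mul_zero]

lemma GM_rel (j : Fin n) : Gop (n := n) (K := K) * Mop j = Mop j * Gop + Mop j := by
  rw [Gop, Finset.sum_mul, Finset.mul_sum]
  have h : ∀ i ∈ Finset.univ, (Mop (K := K) i * Dop i) * Mop j
      = Mop j * (Mop i * Dop i) + (if i = j then Mop i else 0) := fun i _ => MDM_rel i j
  rw [Finset.sum_congr rfl h, Finset.sum_add_distrib,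
    Finset.sum_ite_eq' Finset.univ j (fun i => (Mop (K := K) i))]
  simp

lemma MDMMD_rel (i j : Fin n) : (Mop (K := K) i * Dop i) * (Mop j * Mop j * Dop j)
    = (Mop j * Mop j * Dop j) * (Mop i * Dop i)
      + (if i = j then Mop j * Mop j * Dop j else 0) := by
  rcases eq_or_ne i j with h | h
  · subst h
    rw [if_pos rfl]
    have w : Dop (K := K) i * Mop i = Mop i * Dop i + 1 := weyl i
    have h1 : (Mop (K := K) i * Dop i) * (Mop i * Mop i * Dop i)
        = Mop i * Mop i * Mop i * (Dop i * Dop i)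
          + (Mop i * Mop i * Dop i + Mop i * Mop i * Dop i) := by
      calc (Mop (K := K) i * Dop i) * (Mop i * Mop i * Dop i)
          = Mop i * ((Dop i * Mop i) * Mop i) * Dop i := by noncomm_ring
        _ = Mop i * ((Mop i * Dop i + 1) * Mop i) * Dop i := by rw [w]
        _ = Mop i * Mop i * (Dop i * Mop i) * Dop i + Mop i * Mop i * Dop i := by noncomm_ring
        _ = Mop i * Mop i * (Mop i * Dop i + 1) * Dop i + Mop i * Mop i * Dop i := by rw [w]
        _ = Mop i * Mop i * Mop i * (Dop i * Dop i)
            + (Mop i * Mop i * Dop i + Mop i * Mop i * Dop i) := by noncomm_ring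
    have h2 : (Mop (K := K) i * Mop i * Dop i) * (Mop i * Dop i)
        = Mop i * Mop i * Mop i * (Dop i * Dop i) + Mop i * Mop i * Dop i := by
      calc (Mop (K := K) i * Mop i * Dop i) * (Mop i * Dop i)
          = Mop i * Mop i * (Dop i * Mop i) * Dop i := by noncomm_ring
        _ = Mop i * Mop i * (Mop i * Dop i + 1) * Dop i := by rw [w]
        _ = Mop i * Mop i * Mop i * (Dop i * Dop i) + Mop i * Mop i * Dop i := by noncomm_ring
    rw [h1, h2]
    abel
  · rw [if_neg h, add_zero]
    have hji : j ≠ i := Ne.symm h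
    have cMi : Commute (Mop (K := K) i) (Mop j * Mop j * Dop j) :=
      (((comm_MM i j).mul_right (comm_MM i j)).mul_right ((comm_DM hji).symm))
    have cDi : Commute (Dop (K := K) i) (Mop j * Mop j * Dop j) :=
      (((comm_DM (K := K) h).mul_right (comm_DM (K := K) h)).mul_right (comm_DD (K := K) i j))
    exact (cMi.mul_left cDi).eq

lemma GMMD_rel (j : Fin n) : Gop (n := n) (K := K) * (Mop j * Mop j * Dop j)
    = (Mop j * Mop j * Dop j) * Gop + Mop j * Mop j * Dop j := by
  rw [Gop, Finset.sum_mul, Finset.mul_sum]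
  have h : ∀ i ∈ Finset.univ, (Mop (K := K) i * Dop i) * (Mop j * Mop j * Dop j)
      = (Mop j * Mop j * Dop j) * (Mop i * Dop i)
        + (if i = j then Mop j * Mop j * Dop j else 0) := fun i _ => MDMMD_rel i j
  rw [Finset.sum_congr rfl h, Finset.sum_add_distrib,
    Finset.sum_ite_eq' Finset.univ j (fun _ => (Mop (K := K) j * Mop j * Dop j))]
  simp

lemma MDD_rel (i j : Fin n) : (Mop (K := K) i * Dop i) * Dop j
    = Dop j * (Mop i * Dop i) - (if j = i then Dop i else 0) := by
  have h1 : Dop (K := K) j * (Mop i * Dop i)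
      = Mop i * (Dop j * Dop i) + (if j = i then Dop i else 0) := by
    rw [← mul_assoc, DM_rel, add_mul, mul_assoc]
    split_ifs with h
    · subst h; rw [one_mul]
    · rw [zero_mul]
  rw [h1, mul_assoc, DD_rel]
  abel

lemma GD_rel (j : Fin n) : Gop (n := n) (K := K) * Dop j = Dop j * Gop - Dop j := by
  rw [Gop, Finset.sum_mul, Finset.mul_sum]
  have h : ∀ i ∈ Finset.univ, (Mop (K := K) i * Dop i) * Dop j
      = Dop j * (Mop i * Dop i) - (if j = i then Dop i else 0) := fun i _ => MDD_rel i j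
  rw [Finset.sum_congr rfl h, Finset.sum_sub_distrib,
    Finset.sum_ite_eq Finset.univ j (fun i => (Dop (K := K) i))]
  simp

lemma Hop_eq : Hop (K := K) a = (2:K) • Gop - (∑ j, (a j : K)) • 1 := by
  rw [Hop, Gop, Finset.sum_sub_distrib]
  congr 1
  · exact (Finset.smul_sum).symm
  · exact (Finset.sum_smul).symm

lemma comm_smul_plus (c : K) (T : Module.End K R')
    (h : Gop (n := n) * T = T * Gop + T) :
    ((2:K) • Gop - c • 1) * T = T * ((2:K) • Gop - c • 1) + (2:K) • T := by
  rw [sub_mul, mul_sub, smul_mul_assoc, mul_smul_comm, smul_mul_assoc, mul_smul_comm,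
    one_mul, mul_one, h, smul_add]
  abel

lemma comm_smul_minus (c : K) (T : Module.End K R')
    (h : Gop (n := n) * T = T * Gop - T) :
    ((2:K) • Gop - c • 1) * T = T * ((2:K) • Gop - c • 1) - (2:K) • T := by
  rw [sub_mul, mul_sub, smul_mul_assoc, mul_smul_comm, smul_mul_assoc, mul_smul_comm,
    one_mul, mul_one, h, smul_sub]
  abel

lemma hHE_rel : Hop (K := K) a * Eop a = Eop a * Hop a + (2:K) • Eop a := by
  rw [Hop_eq, Eop, Finset.mul_sum, Finset.sum_mul, Finset.smul_sum, ← Finset.sum_add_distrib]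
  refine Finset.sum_congr rfl fun j _ => ?_
  refine comm_smul_plus _ _ ?_
  rw [mul_sub, sub_mul, mul_smul_comm, smul_mul_assoc, GM_rel, GMMD_rel, smul_add]
  abel

lemma hHF_rel : Hop (K := K) a * Fop = Fop * Hop a - (2:K) • Fop (n := n) := by
  rw [Hop_eq, Fop, Finset.mul_sum, Finset.sum_mul, Finset.smul_sum, ← Finset.sum_sub_distrib]
  refine Finset.sum_congr rfl fun j _ => ?_
  exact comm_smul_minus _ _ (GD_rel j)


open MvPolynomial



/-- Diagonal operator scaling the coefficient of the monomial `x^c` by `w c`. -/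
noncomputable def diagOp (w : (Fin n →₀ ℕ) → K) : Module.End K R' :=
  (basisMonomials (Fin n) K).constr K (fun c => monomial c (w c))

lemma diagOp_monomial (w : (Fin n →₀ ℕ) → K) (c : Fin n →₀ ℕ) (r : K) :
    diagOp w (monomial c r) = monomial c (w c * r) := by
  have h0 : (monomial c r : R') = r • monomial c 1 := by
    rw [smul_monomial, smul_eq_mul, mul_one]
  rw [h0, map_smul, diagOp]
  have h1 : (monomial c (1:K) : R') = basisMonomials (Fin n) K c := by
    rw [coe_basisMonomials]
  rw [h1, Module.Basis.constr_basis, smul_monomial]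
  congr 1
  rw [smul_eq_mul]
  ring

lemma coeff_diagOp (w : (Fin n →₀ ℕ) → K) (f : R') (d : Fin n →₀ ℕ) :
    coeff d (diagOp w f) = w d * coeff d f := by
  induction f using MvPolynomial.induction_on' with
  | monomial u c =>
    rw [diagOp_monomial, coeff_monomial, coeff_monomial]
    split_ifs with h
    · subst h; rfl
    · rw [mul_zero]
  | add p q hp hq => rw [map_add, coeff_add, hp, hq, coeff_add, mul_add]



lemma X_mul_mono (j : Fin n) (b : Fin n →₀ ℕ) (r : K) :
    (X j : R') * monomial b r = monomial (b + Finsupp.single j 1) r := by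
  rw [X, monomial_mul, one_mul, add_comm]

lemma Eop_monomial (a b : Fin n →₀ ℕ) (r : K) :
    Eop (K := K) a (monomial b r)
      = ∑ j, monomial (b + Finsupp.single j 1) (((a j : K) - (b j : K)) * r) := by
  rw [Eop, LinearMap.sum_apply]
  refine Finset.sum_congr rfl fun j _ => ?_
  simp only [LinearMap.sub_apply, LinearMap.smul_apply, Module.End.mul_apply,
    Mop_apply, Dop_apply, pderiv_monomial]
  rcases Nat.eq_zero_or_pos (b j) with hb | hb
  · rw [hb]
    simp only [Nat.cast_zero, mul_zero, map_zero, sub_zero, X_mul_mono, smul_monomial,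
      smul_eq_mul]
  · have h1 : b - Finsupp.single j 1 + Finsupp.single j 1 = b :=
      tsub_add_cancel_of_le (Finsupp.single_le_iff.mpr hb)
    rw [X_mul_mono j b r, X_mul_mono j (b - Finsupp.single j 1) (r * (b j : K)), h1,
      X_mul_mono j b (r * (b j : K)), smul_monomial, ← map_sub]
    congr 1
    rw [smul_eq_mul]
    ring

lemma lmul_monomial (b : Fin n →₀ ℕ) (r : K) :
    (∑ j : Fin n, (X j : R')) * monomial b r
      = ∑ j, monomial (b + Finsupp.single j 1) r := by
  rw [Finset.sum_mul]
  exact Finset.sum_congr rfl fun j _ => X_mul_mono j b r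

/-- Weight function of the truncation operator. -/
noncomputable def wPi (a : Fin n →₀ ℕ) : (Fin n →₀ ℕ) → K :=
  fun c => if c ≤ a then 1 else 0

/-- Weight function of the conjugating diagonal operator. -/
noncomputable def wDD (a : Fin n →₀ ℕ) : (Fin n →₀ ℕ) → K :=
  fun c => if c ≤ a then ((∏ i, (a i - c i).factorial : ℕ) : K) else 0

lemma box_step {a b : Fin n →₀ ℕ} {j : Fin n} (hb : b ≤ a) (hj : b j < a j) :
    b + Finsupp.single j 1 ≤ a := by
  intro i
  rcases eq_or_ne i j with h | h
  · subst h
    simpa [Finsupp.add_apply, Finsupp.single_eq_same] using hj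
  · simpa [Finsupp.add_apply, Finsupp.single_eq_of_ne' (Ne.symm h)] using hb i

lemma box_mem {a b : Fin n →₀ ℕ} {j : Fin n} (h : b + Finsupp.single j 1 ≤ a) : b ≤ a :=
  le_trans (by simp) h

lemma box_lt {a b : Fin n →₀ ℕ} {j : Fin n} (h : b + Finsupp.single j 1 ≤ a) :
    b j < a j := by
  have h2 := h j
  simp only [Finsupp.add_apply, Finsupp.single_eq_same] at h2
  omega

lemma key_scalar (a b : Fin n →₀ ℕ) (j : Fin n) :
    wDD a (b + Finsupp.single j 1) * ((a j : K) - (b j : K))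
      = wPi a (b + Finsupp.single j 1) * wDD a b := by
  unfold wDD wPi
  by_cases h1 : b + Finsupp.single j 1 ≤ a
  · have hb : b ≤ a := box_mem h1
    have hj : b j < a j := box_lt h1
    rw [if_pos h1, if_pos h1, if_pos hb, one_mul]
    have hcast : ((a j : K) - (b j : K)) = ((a j - b j : ℕ) : K) := by
      rw [Nat.cast_sub (le_of_lt hj)]
    rw [hcast, ← Nat.cast_mul]
    refine congrArg _ ?_
    have hj' : 0 < a j - b j := by omega
    have eA : ∀ i ∈ Finset.univ.erase j,
        (a i - ((b + Finsupp.single j 1 : Fin n →₀ ℕ)) i).factorial = (a i - b i).factorial := by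
      intro i hi
      have hij : i ≠ j := Finset.ne_of_mem_erase hi
      rw [Finsupp.add_apply, Finsupp.single_eq_of_ne' (Ne.symm hij), add_zero]
    have eJ : (a j - ((b + Finsupp.single j 1 : Fin n →₀ ℕ)) j) = (a j - b j) - 1 := by
      rw [Finsupp.add_apply, Finsupp.single_eq_same]
      omega
    rw [← Finset.mul_prod_erase Finset.univ _ (Finset.mem_univ j),
        ← Finset.mul_prod_erase Finset.univ (fun i => (a i - b i).factorial) (Finset.mem_univ j),
        Finset.prod_congr rfl eA, eJ]
    calc ((a j - b j - 1).factorial * ∏ i ∈ Finset.univ.erase j, (a i - b i).factorial)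
          * (a j - b j)
        = ((a j - b j) * (a j - b j - 1).factorial)
            * ∏ i ∈ Finset.univ.erase j, (a i - b i).factorial := by ring
      _ = (a j - b j).factorial * ∏ i ∈ Finset.univ.erase j, (a i - b i).factorial := by
          rw [Nat.mul_factorial_pred hj'.ne']
  · rw [if_neg h1, if_neg h1, zero_mul, zero_mul]

/-- Truncation to the box `≤ a`. -/
noncomputable def piOp (a : Fin n →₀ ℕ) : Module.End K R' := diagOp (wPi a)

/-- Conjugating diagonal operator. -/
noncomputable def dOp (a : Fin n →₀ ℕ) : Module.End K R' := diagOp (wDD a)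

lemma DE_identity (a : Fin n →₀ ℕ) (v : R') :
    dOp a (Eop a v) = piOp a ((∑ j : Fin n, (X j : R')) * dOp a v) := by
  induction v using MvPolynomial.induction_on' with
  | monomial b r =>
    rw [Eop_monomial, map_sum, dOp, piOp, diagOp_monomial, lmul_monomial, map_sum]
    refine Finset.sum_congr rfl fun j _ => ?_
    rw [diagOp_monomial, diagOp_monomial]
    congr 1
    rw [← mul_assoc, ← mul_assoc, key_scalar]
  | add p q hp hq =>
    rw [map_add, map_add, map_add, mul_add, map_add, hp, hq]

lemma pi_local (a : Fin n →₀ ℕ) (v : R') :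
    piOp a ((∑ j : Fin n, (X j : R')) * piOp a v)
      = piOp a ((∑ j : Fin n, (X j : R')) * v) := by
  induction v using MvPolynomial.induction_on' with
  | monomial b r =>
    rw [piOp, diagOp_monomial, lmul_monomial, lmul_monomial, map_sum, map_sum]
    refine Finset.sum_congr rfl fun j _ => ?_
    rw [diagOp_monomial, diagOp_monomial]
    congr 1
    rw [← mul_assoc]
    congr 1
    unfold wPi
    by_cases h1 : b + Finsupp.single j 1 ≤ a
    · rw [if_pos h1, if_pos (box_mem h1), mul_one]
    · simp [if_neg h1]
  | add p q hp hq =>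
    simp only [map_add, mul_add]
    rw [hp, hq]

lemma supp_Eop (a : Fin n →₀ ℕ) (v : R') (hv : ∀ d ∈ v.support, d ≤ a) :
    ∀ d ∈ (Eop (K := K) a v).support, d ≤ a := by
  intro d hd
  have hrw : Eop (K := K) a v = ∑ b ∈ v.support, ∑ j,
      monomial (b + Finsupp.single j 1) (((a j : K) - (b j : K)) * coeff b v) := by
    conv_lhs => rw [v.as_sum]
    rw [map_sum]
    exact Finset.sum_congr rfl fun b _ => Eop_monomial a b (coeff b v)
  rw [hrw] at hd
  classical
  obtain ⟨b, hb, hd2⟩ := Finset.mem_biUnion.mp (MvPolynomial.support_sum hd)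
  obtain ⟨j, _, hd3⟩ := Finset.mem_biUnion.mp (MvPolynomial.support_sum hd2)
  have hsub := MvPolynomial.support_monomial_subset hd3
  rw [Finset.mem_singleton] at hsub
  subst hsub
  have hne : ((a j : K) - (b j : K)) * coeff b v ≠ 0 := by
    intro h0
    rw [h0] at hd3
    simp at hd3
  have haj : a j ≠ b j := by
    intro h0
    apply hne
    rw [h0, sub_self, zero_mul]
  have hba : b ≤ a := hv b hb
  exact box_step hba (lt_of_le_of_ne (hba j) (Ne.symm haj))

lemma dOp_inj_box (a : Fin n →₀ ℕ) (v : R') (hv : ∀ d ∈ v.support, d ≤ a)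
    (h0 : dOp a v = 0) : v = 0 := by
  apply MvPolynomial.ext
  intro d
  rw [coeff_zero]
  by_cases hd : d ∈ v.support
  · have h1 : coeff d (dOp a v) = wDD a d * coeff d v := by
      rw [dOp]
      exact coeff_diagOp _ _ _
    rw [h0, coeff_zero] at h1
    have h2 : wDD (K := K) a d ≠ 0 := by
      unfold wDD
      rw [if_pos (hv d hd)]
      have hpos : 0 < ∏ i : Fin n, (a i - d i).factorial :=
        Finset.prod_pos fun i _ => Nat.factorial_pos _
      exact Nat.cast_ne_zero.mpr hpos.ne'
    exact (mul_eq_zero.mp h1.symm).resolve_left h2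
  · exact MvPolynomial.notMem_support_iff.mp hd

lemma Gop_monomial (b : Fin n →₀ ℕ) (r : K) :
    Gop (K := K) (monomial b r) = ((∑ j, b j : ℕ) : K) • monomial b r := by
  rw [Gop, LinearMap.sum_apply]
  simp only [Module.End.mul_apply, Mop_apply, Dop_apply]
  have h : ∀ j ∈ Finset.univ, (X j : R') * pderiv j (monomial b r)
      = monomial b (r * (b j : K)) := by
    intro j _
    rw [pderiv_monomial]
    rcases Nat.eq_zero_or_pos (b j) with hb | hb
    · rw [hb]
      simp
    · have h1 : b - Finsupp.single j 1 + Finsupp.single j 1 = b :=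
        tsub_add_cancel_of_le (Finsupp.single_le_iff.mpr hb)
      rw [X_mul_mono, h1]
  rw [Finset.sum_congr rfl h, ← map_sum, smul_monomial]
  congr 1
  rw [← Finset.mul_sum, smul_eq_mul, Nat.cast_sum]
  ring

lemma sum_univ_eq_degree (b : Fin n →₀ ℕ) : (∑ j, b j) = Finsupp.degree b := by
  exact (Finset.sum_subset (Finset.subset_univ _)
    (fun i _ hi => Finsupp.notMem_support_iff.mp hi)).symm

lemma Gop_homog (k : ℕ) (v : R') (hv : v.IsHomogeneous k) : Gop (K := K) v = (k : K) • v := by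
  conv_lhs => rw [v.as_sum]
  rw [map_sum]
  have h : ∀ b ∈ v.support, Gop (K := K) (monomial b (coeff b v))
      = (k : K) • monomial b (coeff b v) := by
    intro b hb
    rw [Gop_monomial]
    congr 2
    rw [sum_univ_eq_degree]
    have := hv (MvPolynomial.mem_support_iff.mp hb)
    rw [Finsupp.degree_eq_weight_one]
    exact this
  rw [Finset.sum_congr rfl h, ← Finset.smul_sum, ← v.as_sum]

lemma Hop_homog (a : Fin n →₀ ℕ) (k : ℕ) (v : R') (hv : v.IsHomogeneous k) :
    Hop (K := K) a v = ((2 * k : K) - ((∑ j, a j : ℕ) : K)) • v := by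
  rw [Hop_eq, LinearMap.sub_apply, LinearMap.smul_apply, LinearMap.smul_apply,
    Module.End.one_apply, Gop_homog k v hv, smul_smul, sub_smul, Nat.cast_sum]

lemma Fop_monomial (b : Fin n →₀ ℕ) (r : K) :
    Fop (K := K) (n := n) (monomial b r)
      = ∑ j, monomial (b - Finsupp.single j 1) (r * (b j : K)) := by
  rw [Fop, LinearMap.sum_apply]
  exact Finset.sum_congr rfl fun j _ => pderiv_monomial

lemma Fop_homog (k : ℕ) (v : R') (hv : v.IsHomogeneous (k + 1)) :
    (Fop (K := K) (n := n) v).IsHomogeneous k := by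
  have hrw : Fop (K := K) (n := n) v = ∑ b ∈ v.support, Fop (monomial b (coeff b v)) := by
    conv_lhs => rw [v.as_sum]
    rw [map_sum]
  rw [← mem_homogeneousSubmodule, hrw]
  refine Submodule.sum_mem _ fun b hb => ?_
  rw [Fop_monomial]
  refine Submodule.sum_mem _ fun j _ => ?_
  rw [mem_homogeneousSubmodule]
  rcases Nat.eq_zero_or_pos (b j) with h0 | h0
  · rw [h0]
    simp only [Nat.cast_zero, mul_zero, map_zero]
    exact isHomogeneous_zero _ _ _
  · refine isHomogeneous_monomial _ ?_
    have hdb : Finsupp.degree b = k + 1 := by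
      rw [Finsupp.degree_eq_weight_one]
      exact hv (MvPolynomial.mem_support_iff.mp hb)
    have h1 : b - Finsupp.single j 1 + Finsupp.single j 1 = b :=
      tsub_add_cancel_of_le (Finsupp.single_le_iff.mpr h0)
    have h2 : Finsupp.degree (b - Finsupp.single j 1) + 1 = k + 1 := by
      rw [← hdb]
      conv_rhs => rw [← h1]
      rw [← sum_univ_eq_degree, ← sum_univ_eq_degree]
      simp only [Finsupp.add_apply]
      rw [Finset.sum_add_distrib]
      congr 1
      simp [Finsupp.single_apply]
    omega
  
lemma Fop_homog_zero (v : R') (hv : v.IsHomogeneous 0) : Fop (K := K) (n := n) v = 0 := by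
  conv_lhs => rw [v.as_sum]
  rw [map_sum]
  refine Finset.sum_eq_zero fun b hb => ?_
  have hdb : Finsupp.degree b = 0 := by
    rw [Finsupp.degree_eq_weight_one]
    exact hv (MvPolynomial.mem_support_iff.mp hb)
  have hb0 : b = 0 := (Finsupp.degree_eq_zero_iff b).mp hdb
  subst hb0
  rw [Fop_monomial]
  refine Finset.sum_eq_zero fun j _ => ?_
  simp

lemma Fop_pow_homog : ∀ (k : ℕ) (v : R'), v.IsHomogeneous k
    → (Fop (K := K) (n := n) ^ (k + 1)) v = 0 := by
  intro k
  induction k with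
  | zero => intro v hv; rw [pow_one]; exact Fop_homog_zero v hv
  | succ k ih =>
    intro v hv
    rw [pow_succ, Module.End.mul_apply]
    exact ih (Fop v) (Fop_homog k v hv)

lemma degree_add_single (c : Fin n →₀ ℕ) (j : Fin n) :
    Finsupp.degree (c + Finsupp.single j 1) = Finsupp.degree c + 1 := by
  rw [← sum_univ_eq_degree, ← sum_univ_eq_degree]
  simp only [Finsupp.add_apply]
  rw [Finset.sum_add_distrib]
  congr 1
  simp [Finsupp.single_apply]

lemma socle_exists (t : ℕ) (P : (Fin n →₀ ℕ) → Prop)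
    (hlev : ∀ c : Fin n →₀ ℕ, Finsupp.degree c < t →
      (∀ j, P (c + Finsupp.single j 1)) → P c) :
    ∀ (d : ℕ) (c : Fin n →₀ ℕ), Finsupp.degree c + d = t → ¬ P c →
      ∃ b, c ≤ b ∧ Finsupp.degree b = t ∧ ¬ P b := by
  intro d
  induction d with
  | zero =>
    intro c hc hP
    exact ⟨c, le_rfl, by omega, hP⟩
  | succ d ih =>
    intro c hc hP
    by_cases h : ∀ j, P (c + Finsupp.single j 1)
    · exact absurd (hlev c (by omega) h) hP
    · push_neg at h
      obtain ⟨j, hj⟩ := h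
      obtain ⟨b, hb1, hb2, hb3⟩ := ih (c + Finsupp.single j 1)
        (by rw [degree_add_single]; omega) hj
      exact ⟨b, le_trans (by simp) hb1, hb2, hb3⟩

end Ops

open MvPolynomial

set_option maxHeartbeats 2000000 in
/-- Let `R = K[x_1,...,x_n]`, `char K = 0`, and let `I ⊆ R` be a monomial
ideal such that `A = R/I` is Artinian and level of socle degree `t` (every
homogeneous polynomial of degree `> t` is in `I`, some degree-`t` homogeneous
polynomial is not in `I`, and every socle element of `A` is the class of a
homogeneous polynomial of degree `t`). Then for `ℓ = x_1 + ... + x_n` and any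
`k < t/2`, multiplication `×ℓ^{t-2k} : A_k → A_{t-k}` is injective. -/
theorem level_monomial_power_injective {n : ℕ} {K : Type*} [Field K] [CharZero K]
    (I : Ideal (MvPolynomial (Fin n) K))
    (hmono : ∃ S : Set (Fin n →₀ ℕ),
      I = Ideal.span ((fun d => (monomial d (1 : K) : MvPolynomial (Fin n) K)) '' S))
    (hartinian : ∀ j : Fin n, ∃ k : ℕ, (X j : MvPolynomial (Fin n) K) ^ k ∈ I)
    (t : ℕ)
    (htop : ∀ (f : MvPolynomial (Fin n) K) (d : ℕ), t < d → f.IsHomogeneous d → f ∈ I)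
    (hsocdeg : ∃ f : MvPolynomial (Fin n) K, f.IsHomogeneous t ∧ f ∉ I)
    (hlevel : ∀ f : MvPolynomial (Fin n) K, (∀ j : Fin n, X j * f ∈ I) →
      ∃ g : MvPolynomial (Fin n) K, g.IsHomogeneous t ∧ f - g ∈ I) :
    ∀ k : ℕ, 2 * k < t → ∀ f : MvPolynomial (Fin n) K, f.IsHomogeneous k →
      (∑ j : Fin n, X j) ^ (t - 2 * k) * f ∈ I → f ∈ I := by
  classical
  obtain ⟨S, rfl⟩ := hmono
  intro k hk f hf hmem
  set P : (Fin n →₀ ℕ) → Prop := fun c => ∃ si ∈ S, si ≤ c with hP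
  have hup : ∀ c c' : Fin n →₀ ℕ, P c → c ≤ c' → P c' := by
    rintro c c' ⟨si, hsi, hle⟩ hcc
    exact ⟨si, hsi, le_trans hle hcc⟩
  rw [mem_ideal_span_monomial_image] at hmem ⊢
  by_contra hcon
  push_neg at hcon
  obtain ⟨c₀, hc₀supp, hc₀⟩ := hcon
  have hc₀P : ¬ P c₀ := by
    rintro ⟨si, hsi, hle⟩
    exact hc₀ si hsi hle
  -- the level hypothesis, combinatorially
  have hlev' : ∀ c : Fin n →₀ ℕ, Finsupp.degree c < t →
      (∀ j, P (c + Finsupp.single j 1)) → P c := by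
    intro c hct hall
    have hX : ∀ j : Fin n, X j * monomial c (1:K)
        ∈ Ideal.span ((fun d => (monomial d (1 : K) : MvPolynomial (Fin n) K)) '' S) := by
      intro j
      rw [X_mul_mono, mem_ideal_span_monomial_image]
      intro u hu
      rw [support_monomial] at hu
      simp only [one_ne_zero, if_false, Finset.mem_singleton] at hu
      subst hu
      exact hall j
    obtain ⟨g, hg, hfg⟩ := hlevel (monomial c 1) hX
    rw [mem_ideal_span_monomial_image] at hfg
    refine hfg c ?_
    rw [mem_support_iff, coeff_sub, coeff_monomial, if_pos rfl]
    have hgc : coeff c g = 0 := hg.coeff_eq_zero (by omega)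
    rw [hgc, sub_zero]
    exact one_ne_zero
  -- degree of c₀ is k
  have hdc₀ : Finsupp.degree c₀ = k := by
    rw [Finsupp.degree_eq_weight_one]
    exact hf (mem_support_iff.mp hc₀supp)
  -- find the socle monomial a above c₀
  obtain ⟨a, hca, hat, haP⟩ := socle_exists t P hlev' (t - k) c₀ (by omega) hc₀P
  -- the conjugated polynomial g
  set w' : (Fin n →₀ ℕ) → K :=
    fun c => if c ≤ a then (((∏ i, (a i - c i).factorial : ℕ) : K))⁻¹ else 0 with hw'
  set g : MvPolynomial (Fin n) K := diagOp w' f with hgdef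
  have hfact_ne : ∀ c : Fin n →₀ ℕ,
      (((∏ i, (a i - c i).factorial : ℕ) : K)) ≠ 0 := by
    intro c
    have hpos : 0 < ∏ i : Fin n, (a i - c i).factorial :=
      Finset.prod_pos fun i _ => Nat.factorial_pos _
    exact Nat.cast_ne_zero.mpr hpos.ne'
  have hgcoeff : ∀ d, coeff d g = w' d * coeff d f := fun d => coeff_diagOp w' f d
  have hgne : g ≠ 0 := by
    intro h0
    have h1 : coeff c₀ g = 0 := by rw [h0, coeff_zero]
    rw [hgcoeff c₀, hw'] at h1
    simp only [if_pos hca] at h1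
    rcases mul_eq_zero.mp h1 with h2 | h2
    · exact inv_ne_zero (hfact_ne c₀) h2
    · exact mem_support_iff.mp hc₀supp h2
  have hghom : g.IsHomogeneous k := by
    intro d hd
    rw [hgcoeff d] at hd
    exact hf fun h0 => hd (by rw [h0, mul_zero])
  have hgsupp : ∀ d ∈ g.support, d ≤ a := by
    intro d hd
    rw [mem_support_iff, hgcoeff d, hw'] at hd
    by_contra hda
    simp only [if_neg hda, zero_mul] at hd
    exact hd rfl
  -- truncation of ℓ^m f vanishes
  set m : ℕ := t - 2 * k with hm
  have hπ0 : piOp a ((∑ j : Fin n, (X j : MvPolynomial (Fin n) K)) ^ m * f) = 0 := by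
    apply MvPolynomial.ext
    intro u
    rw [coeff_zero, piOp]
    rw [coeff_diagOp]
    unfold wPi
    by_cases hu : u ≤ a
    · rw [if_pos hu, one_mul]
      by_contra hne
      exact haP (hup u a (hmem u (mem_support_iff.mpr hne)) hu)
    · rw [if_neg hu, zero_mul]
  -- dOp a g = piOp a f
  have hbase : dOp a g = piOp a f := by
    apply MvPolynomial.ext
    intro u
    rw [hgdef, dOp, piOp, coeff_diagOp, coeff_diagOp, coeff_diagOp, hw']
    unfold wDD wPi
    simp only []
    by_cases hu : u ≤ a
    · rw [if_pos hu, if_pos hu, if_pos hu, one_mul, ← mul_assoc,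
        mul_inv_cancel₀ (hfact_ne u), one_mul]
    · rw [if_neg hu, if_neg hu, if_neg hu, zero_mul, zero_mul]
  -- the conjugation chain
  have hchain : ∀ i : ℕ, dOp a ((Eop a ^ i) g)
      = piOp a ((∑ j : Fin n, (X j : MvPolynomial (Fin n) K)) ^ i * f) := by
    intro i
    induction i with
    | zero => rw [pow_zero, pow_zero, Module.End.one_apply, one_mul, hbase]
    | succ i ih =>
      rw [pow_succ', Module.End.mul_apply, DE_identity, ih, pi_local, ← mul_assoc, ← pow_succ']
  have hsuppE : ∀ i : ℕ, ∀ d ∈ ((Eop a ^ i) g).support, d ≤ a := by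
    intro i
    induction i with
    | zero =>
      rw [pow_zero]
      intro d hd
      exact hgsupp d (by simpa using hd)
    | succ i ih =>
      intro d hd
      rw [pow_succ', Module.End.mul_apply] at hd
      exact supp_Eop a _ ih d hd
  have hEg : (Eop a ^ m) g = 0 := by
    refine dOp_inj_box a _ (hsuppE m) ?_
    rw [hchain m, hπ0]
  have hHg : Hop a g = -((m : ℕ) : K) • g := by
    rw [Hop_homog a k g hghom]
    congr 1
    rw [sum_univ_eq_degree, hat, hm]
    rw [Nat.cast_sub (by omega)]
    push_cast
    ring
  have hFg : (Fop ^ (k + 1)) g = 0 := Fop_pow_homog k g hghom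
  exact hgne (sl2_vanish (Eop a) Fop (Hop a) (hEF_rel a) (hHE_rel a) (hHF_rel a)
    (k+1) m g hHg hFg hEg)
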